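/- (Monotonicity under tighter prior information) Let Δmin, Δmax and Δmin', Δmax' be two pairs of bounds with 0 ≤ Δmin s a s' ≤ Δmin' s a s' and Δmax' s a s' ≤ Δmax s a s' for all s, a, s' (so the primed intervals are narrower), and suppose the primed feasible set Feas'(s,a) := {x : S → ℝ | (∀ s', Δmin' s a s' ≤ x s' ∧ x s' ≤ Δmax' s a s') ∧ ∑_{s'} x s' = 1} is nonempty for every s, a. Let g and g' be the worst-case satisfaction lower bounds computed from (Δmin, Δmax) and (Δmin', Δmax') respectively, with the same accepting set F. Then g k s ≤ g' k s for all k : ℕ and s : S; i.e., narrower transition-probability intervals yield a larger (less conservative) lower bound on the probability of constraint satisfaction. -/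

import Mathlib

open Finset
open scoped Classical

/-- The feasible set of transition-probability vectors at state `s` under action `a`. -/
def Feas {S A : Type*} [Fintype S] (Δmin Δmax : S → A → S → ℝ) (s : S) (a : A) :
    Set (S → ℝ) :=
  {x | (∀ s', Δmin s a s' ≤ x s' ∧ x s' ≤ Δmax s a s') ∧ ∑ s', x s' = 1}

/-- Worst-case one-step value of `h` over the feasible set. -/
noncomputable def kappaOf {S A : Type*} [Fintype S] (Δmin Δmax : S → A → S → ℝ)
    (h : S → ℝ) (s : S) (a : A) : ℝ :=
  sInf ((fun x : S → ℝ => ∑ s', h s' * x s') '' Feas Δmin Δmax s a)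

/-- The worst-case satisfaction lower bound `g`, indexed by remaining time. -/
noncomputable def gval {S A : Type*} [Fintype S] [Fintype A] [Nonempty A]
    (Δmin Δmax : S → A → S → ℝ) (F : Finset S) : ℕ → S → ℝ
  | 0 => fun s => if s ∈ F then 1 else 0
  | (k+1) => fun s =>
      Finset.univ.sup' Finset.univ_nonempty
        (fun a : A => kappaOf Δmin Δmax (gval Δmin Δmax F k) s a)

/-- `κ k s a`: worst-case optimization value at remaining time `k`. -/
noncomputable def kappa {S A : Type*} [Fintype S] [Fintype A] [Nonempty A]
    (Δmin Δmax : S → A → S → ℝ) (F : Finset S) (k : ℕ) (s : S) (a : A) : ℝ :=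
  kappaOf Δmin Δmax (gval Δmin Δmax F k) s a

/-- A transition kernel is admissible if it lies in the feasible set everywhere. -/
def Admissible {S A : Type*} [Fintype S] (Δmin Δmax Δ : S → A → S → ℝ) : Prop :=
  ∀ s a, Δ s a ∈ Feas Δmin Δmax s a

/-- Success probability of reaching `F` within the remaining time under policy `π`. -/
noncomputable def vpi {S A : Type*} [Fintype S] (Δ : S → A → S → ℝ) (F : Finset S)
    (π : ℕ → S → A) : ℕ → S → ℝ
  | 0 => fun s => if s ∈ F then 1 else 0
  | (k+1) => fun s => ∑ s', Δ s (π (k+1) s) s' * vpi Δ F π k s'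

/-- A policy is κ-greedy if its action attains the max in the recursion for `g`. -/
def Greedy {S A : Type*} [Fintype S] [Fintype A] [Nonempty A]
    (Δmin Δmax : S → A → S → ℝ) (F : Finset S) (π : ℕ → S → A) : Prop :=
  ∀ k s, kappa Δmin Δmax F k s (π (k+1) s) = gval Δmin Δmax F (k+1) s

/-- `Act Δmin Δmax F p k s` is the pruned action set at remaining time `k+1`
(written `Act (k+1) s` in the paper): actions whose every possibly-reached
successor `s'` (i.e. `Δmax s a s' > 0`) satisfies `g k s' ≥ p`. -/
def Act {S A : Type*} [Fintype S] [Fintype A] [Nonempty A]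
    (Δmin Δmax : S → A → S → ℝ) (F : Finset S) (p : ℝ) (k : ℕ) (s : S) : Set A :=
  {a | ∀ s', 0 < Δmax s a s' → p ≤ gval Δmin Δmax F k s'}


lemma gval_nonneg {S A : Type*} [Fintype S] [Fintype A] [Nonempty S] [Nonempty A]
    (Δmin Δmax : S → A → S → ℝ) (h0 : ∀ s a s', 0 ≤ Δmin s a s') (F : Finset S) :
    ∀ k s, 0 ≤ gval Δmin Δmax F k s := by
  intro k
  induction k with
  | zero => intro s; simp [gval]; positivity
  | succ k ih =>
    intro s
    have ha : ∀ a : A, (0:ℝ) ≤ kappaOf Δmin Δmax (gval Δmin Δmax F k) s a := by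
      intro a
      rcases Set.eq_empty_or_nonempty (Feas Δmin Δmax s a) with he | hne
      · simp [kappaOf, he, Real.sInf_empty]
      · apply le_csInf (hne.image _)
        rintro b ⟨x, hx, rfl⟩
        refine Finset.sum_nonneg fun s' _ => mul_nonneg (ih s') ?_
        exact le_trans (h0 s a s') (hx.1 s').1
    simp only [gval]; exact le_trans (ha (Classical.arbitrary A))
      (Finset.le_sup' _ (Finset.mem_univ (Classical.arbitrary A)))

/-- narrower transition-probability intervals yield a larger
(less conservative) worst-case lower bound `g` on the probability of
constraint satisfaction. -/
theorem gval_mono_of_tighter_bounds {S A : Type*} [Fintype S] [Fintype A]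
    [Nonempty S] [Nonempty A]
    (Δmin Δmax Δmin' Δmax' : S → A → S → ℝ)
    (h0 : ∀ s a s', 0 ≤ Δmin s a s')
    (hmin : ∀ s a s', Δmin s a s' ≤ Δmin' s a s')
    (hmax : ∀ s a s', Δmax' s a s' ≤ Δmax s a s')
    (hne' : ∀ (s : S) (a : A), (Feas Δmin' Δmax' s a).Nonempty)
    (F : Finset S) :
    ∀ (k : ℕ) (s : S), gval Δmin Δmax F k s ≤ gval Δmin' Δmax' F k s := by
  intro k
  induction k with
  | zero => intro s; rfl
  | succ k ih =>
    intro s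
    have sub : ∀ a, Feas Δmin' Δmax' s a ⊆ Feas Δmin Δmax s a := by
      rintro a x ⟨hb, hs⟩
      exact ⟨fun s' => ⟨le_trans (hmin s a s') (hb s').1, le_trans (hb s').2 (hmax s a s')⟩, hs⟩
    have key : ∀ a : A, kappaOf Δmin Δmax (gval Δmin Δmax F k) s a ≤
        kappaOf Δmin' Δmax' (gval Δmin' Δmax' F k) s a := by
      intro a
      apply le_csInf ((hne' s a).image _)
      rintro b ⟨x, hx, rfl⟩
      have hxF : x ∈ Feas Δmin Δmax s a := sub a hx
      have hxnn : ∀ s', 0 ≤ x s' := fun s' => le_trans (h0 s a s') (hxF.1 s').1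
      have bdd : BddBelow ((fun x : S → ℝ => ∑ s', gval Δmin Δmax F k s' * x s') ''
          Feas Δmin Δmax s a) := by
        refine ⟨0, ?_⟩
        rintro b ⟨y, hy, rfl⟩
        exact Finset.sum_nonneg fun s' _ => mul_nonneg (gval_nonneg Δmin Δmax h0 F k s')
          (le_trans (h0 s a s') (hy.1 s').1)
      calc kappaOf Δmin Δmax (gval Δmin Δmax F k) s a
          ≤ ∑ s', gval Δmin Δmax F k s' * x s' := csInf_le bdd ⟨x, hxF, rfl⟩
        _ ≤ ∑ s', gval Δmin' Δmax' F k s' * x s' :=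
            Finset.sum_le_sum fun s' _ => mul_le_mul_of_nonneg_right (ih s') (hxnn s')
    simp only [gval]
    apply Finset.sup'_le
    intro a _
    exact le_trans (key a) (Finset.le_sup' _ (Finset.mem_univ a))
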